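/- Let b be a real number and let f : [b, ∞) → ℝ be differentiable, with derivative f′ monotonically decreasing on [b, ∞) and f′(b) < 0. Then Σ_{n=0}^∞ e^{f(b+n)} ≤ e^{f(b)} / (1 − e^{f′(b)}), the series on the left converging. -/

import Mathlib

open Real

theorem stmt15 (b : ℝ) (f f' : ℝ → ℝ)
    (hderiv : ∀ x ∈ Set.Ici b, HasDerivWithinAt f (f' x) (Set.Ici b) x)
    (hanti : AntitoneOn f' (Set.Ici b)) (hneg : f' b < 0) :
    Summable (fun n : ℕ => Real.exp (f (b + n))) ∧
    ∑' n : ℕ, Real.exp (f (b + n)) ≤ Real.exp (f b) / (1 - Real.exp (f' b)) := by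
  -- key linear bound: f x ≤ f b + f' b * (x - b) for x ≥ b
  have key : ∀ x ∈ Set.Ici b, f x ≤ f b + f' b * (x - b) := by
    intro x hx
    set g : ℝ → ℝ := fun y => f y - f' b * y with hg
    have hgderiv : ∀ y ∈ Set.Ici b, HasDerivWithinAt g (f' y - f' b) (Set.Ici b) y := by
      intro y hy
      exact ((hderiv y hy).sub ((hasDerivWithinAt_id y (Set.Ici b)).const_mul (f' b))).congr_deriv (by ring)
    have hcont : ContinuousOn g (Set.Ici b) := fun y hy =>
      (hgderiv y hy).continuousWithinAt
    have hanti' : AntitoneOn g (Set.Ici b) := by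
      refine antitoneOn_of_hasDerivWithinAt_nonpos (convex_Ici b) hcont
        (fun y hy => (hgderiv y (interior_subset hy)).mono interior_subset) ?_
      intro y hy
      rw [interior_Ici] at hy
      have := hanti Set.self_mem_Ici (Set.mem_Ici.mpr (le_of_lt (Set.mem_Ioi.mp hy))) (le_of_lt (Set.mem_Ioi.mp hy))
      linarith
    have := hanti' Set.self_mem_Ici hx hx
    simp only [g] at this
    nlinarith
  set r : ℝ := Real.exp (f' b) with hr
  have hr0 : 0 ≤ r := (Real.exp_pos _).le
  have hr1 : r < 1 := by
    rw [hr, ← Real.exp_zero]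
    exact Real.exp_lt_exp.2 hneg
  have hbound : ∀ n : ℕ, Real.exp (f (b + n)) ≤ Real.exp (f b) * r ^ n := by
    intro n
    have hmem : b + (n : ℝ) ∈ Set.Ici b :=
      Set.mem_Ici.mpr (le_add_of_nonneg_right (Nat.cast_nonneg n))
    have := key _ hmem
    calc Real.exp (f (b + n)) ≤ Real.exp (f b + f' b * (b + n - b)) := Real.exp_le_exp.2 this
      _ = Real.exp (f b) * r ^ n := by
          rw [Real.exp_add, hr, ← Real.exp_nat_mul]
          ring_nf
  have hgeo : Summable (fun n : ℕ => Real.exp (f b) * r ^ n) :=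
    (summable_geometric_of_lt_one hr0 hr1).mul_left _
  have hsum : Summable (fun n : ℕ => Real.exp (f (b + n))) :=
    Summable.of_nonneg_of_le (fun n => (Real.exp_pos _).le) hbound hgeo
  refine ⟨hsum, ?_⟩
  calc ∑' n : ℕ, Real.exp (f (b + n)) ≤ ∑' n : ℕ, Real.exp (f b) * r ^ n :=
        Summable.tsum_le_tsum hbound hsum hgeo
    _ = Real.exp (f b) * (1 - r)⁻¹ := by
        rw [tsum_mul_left, tsum_geometric_of_lt_one hr0 hr1]
    _ = Real.exp (f b) / (1 - r) := by ring
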